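/- For every cell-centered grid function g on Omega=(0,L)^3 with zero mean there exists a unique zero-mean cell-centered grid function p (with Neumann ghost values) such that -Delta_h p = g at every cell. Moreover, for every MAC vector field f satisfying the no-penetration boundary condition, the cell-centered function div_h f has zero mean, and, letting p be the unique zero-mean solution of -Delta_h p = div_h f, the discrete Helmholtz projection P_H^h f := f + grad_h p satisfies div_h(P_H^h f) = 0 at every cell. -/

import Mathlib

open Finset

noncomputable section

/-! Finite–difference / MAC-grid framework on Ω = (0,L)³ with N cells per
direction and mesh size h = L/N.  A cell-centered grid function is a map
`ℤ → ℤ → ℤ → ℝ` whose meaningful values are at indices in {1,…,N}³; ghost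
values are given by the discrete homogeneous Neumann (reflection) condition,
implemented by clamping indices to {1,…,N}.  The x-component of a MAC vector
field is recorded so that `ux i j k` is the value at the x-face (i+1/2,j,k),
0 ≤ i ≤ N, 1 ≤ j,k ≤ N (analogously for the y,z components), and the
free-slip condition prescribes the tangential ghost values by reflection,
again implemented by clamping the tangential indices. -/

/-- Index clamped into `{1,…,N}`: implements the reflection ghost values. -/
def clampIdx (N : ℕ) (i : ℤ) : ℤ := max 1 (min i (N : ℤ))

/-- Extension of a cell-centered grid function by the discrete homogeneous
Neumann (reflection) ghost values. -/
def nExt (N : ℕ) (φ : ℤ → ℤ → ℤ → ℝ) (i j k : ℤ) : ℝ :=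
  φ (clampIdx N i) (clampIdx N j) (clampIdx N k)

/-- The cell indices `{1,…,N}`. -/
def cellIdx (N : ℕ) : Finset ℤ := Finset.Icc 1 (N : ℤ)

/-- The interior-face indices `{1,…,N-1}`. -/
def faceIdx (N : ℕ) : Finset ℤ := Finset.Icc 1 ((N : ℤ) - 1)

/-- Cell-centered discrete inner product `(φ,ψ) = h³ Σ φψ`. -/
def cip (N : ℕ) (h : ℝ) (φ ψ : ℤ → ℤ → ℤ → ℝ) : ℝ :=
  h ^ 3 * ∑ i ∈ cellIdx N, ∑ j ∈ cellIdx N, ∑ k ∈ cellIdx N, φ i j k * ψ i j k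

/-- Zero discrete mean: `Σ_{i,j,k=1}^N φ_{ijk} = 0`. -/
def zeroMean (N : ℕ) (φ : ℤ → ℤ → ℤ → ℝ) : Prop :=
  ∑ i ∈ cellIdx N, ∑ j ∈ cellIdx N, ∑ k ∈ cellIdx N, φ i j k = 0

/-- Two cell-centered functions agree on all cells. -/
def CellEqOn (N : ℕ) (φ ψ : ℤ → ℤ → ℤ → ℝ) : Prop :=
  ∀ i ∈ cellIdx N, ∀ j ∈ cellIdx N, ∀ k ∈ cellIdx N, φ i j k = ψ i j k

/-- Discrete maximum norm over the cells. -/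
def cInf (N : ℕ) (φ : ℤ → ℤ → ℤ → ℝ) : ℝ :=
  sSup {r : ℝ | ∃ i ∈ cellIdx N, ∃ j ∈ cellIdx N, ∃ k ∈ cellIdx N, r = |φ i j k|}

/-- `D_x φ` at the x-face `(i+1/2,j,k)` (recorded at index `(i,j,k)`);
it vanishes at the boundary faces `i = 0, N` by the Neumann ghost values. -/
def Dx (N : ℕ) (h : ℝ) (φ : ℤ → ℤ → ℤ → ℝ) (i j k : ℤ) : ℝ :=
  (nExt N φ (i + 1) j k - nExt N φ i j k) / h

/-- `D_y φ` at the y-face `(i,j+1/2,k)`. -/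
def Dy (N : ℕ) (h : ℝ) (φ : ℤ → ℤ → ℤ → ℝ) (i j k : ℤ) : ℝ :=
  (nExt N φ i (j + 1) k - nExt N φ i j k) / h

/-- `D_z φ` at the z-face `(i,j,k+1/2)`. -/
def Dz (N : ℕ) (h : ℝ) (φ : ℤ → ℤ → ℤ → ℝ) (i j k : ℤ) : ℝ :=
  (nExt N φ i j (k + 1) - nExt N φ i j k) / h

/-- Cell-centered discrete Laplacian, using the Neumann ghost values. -/
def lapC (N : ℕ) (h : ℝ) (φ : ℤ → ℤ → ℤ → ℝ) (i j k : ℤ) : ℝ :=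
  (nExt N φ (i + 1) j k + nExt N φ (i - 1) j k + nExt N φ i (j + 1) k +
      nExt N φ i (j - 1) k + nExt N φ i j (k + 1) + nExt N φ i j (k - 1) -
      6 * nExt N φ i j k) / h ^ 2

/-- `‖∇_h φ‖₂²`: sum of squared differences over all interior faces. -/
def gradSq (N : ℕ) (h : ℝ) (φ : ℤ → ℤ → ℤ → ℝ) : ℝ :=
  h ^ 3 *
    ((∑ i ∈ faceIdx N, ∑ j ∈ cellIdx N, ∑ k ∈ cellIdx N, Dx N h φ i j k ^ 2) +
      (∑ i ∈ cellIdx N, ∑ j ∈ faceIdx N, ∑ k ∈ cellIdx N, Dy N h φ i j k ^ 2) +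
      (∑ i ∈ cellIdx N, ∑ j ∈ cellIdx N, ∑ k ∈ faceIdx N, Dz N h φ i j k ^ 2))

/-- Face inner product `[f,g]_x`. -/
def ipFX (N : ℕ) (h : ℝ) (f g : ℤ → ℤ → ℤ → ℝ) : ℝ :=
  h ^ 3 / 2 * ∑ i ∈ cellIdx N, ∑ j ∈ cellIdx N, ∑ k ∈ cellIdx N,
    (f i j k * g i j k + f (i - 1) j k * g (i - 1) j k)

/-- Face inner product `[f,g]_y`. -/
def ipFY (N : ℕ) (h : ℝ) (f g : ℤ → ℤ → ℤ → ℝ) : ℝ :=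
  h ^ 3 / 2 * ∑ i ∈ cellIdx N, ∑ j ∈ cellIdx N, ∑ k ∈ cellIdx N,
    (f i j k * g i j k + f i (j - 1) k * g i (j - 1) k)

/-- Face inner product `[f,g]_z`. -/
def ipFZ (N : ℕ) (h : ℝ) (f g : ℤ → ℤ → ℤ → ℝ) : ℝ :=
  h ^ 3 / 2 * ∑ i ∈ cellIdx N, ∑ j ∈ cellIdx N, ∑ k ∈ cellIdx N,
    (f i j k * g i j k + f i j (k - 1) * g i j (k - 1))

/-- MAC inner product of two vector fields. -/
def macIP (N : ℕ) (h : ℝ) (ux uy uz vx vy vz : ℤ → ℤ → ℤ → ℝ) : ℝ :=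
  ipFX N h ux vx + ipFY N h uy vy + ipFZ N h uz vz

/-- Discrete divergence at the cell `(i,j,k)`. -/
def divH (h : ℝ) (ux uy uz : ℤ → ℤ → ℤ → ℝ) (i j k : ℤ) : ℝ :=
  (ux i j k - ux (i - 1) j k + uy i j k - uy i (j - 1) k +
    uz i j k - uz i j (k - 1)) / h

/-- No-penetration boundary condition: the normal boundary face values vanish. -/
def NoPen (N : ℕ) (ux uy uz : ℤ → ℤ → ℤ → ℝ) : Prop :=
  (∀ j ∈ cellIdx N, ∀ k ∈ cellIdx N, ux 0 j k = 0 ∧ ux (N : ℤ) j k = 0) ∧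
  (∀ i ∈ cellIdx N, ∀ k ∈ cellIdx N, uy i 0 k = 0 ∧ uy i (N : ℤ) k = 0) ∧
  (∀ i ∈ cellIdx N, ∀ j ∈ cellIdx N, uz i j 0 = 0 ∧ uz i j (N : ℤ) = 0)

/-- Free-slip (reflection) extension of the x-face component in the
tangential directions. -/
def fExtX (N : ℕ) (f : ℤ → ℤ → ℤ → ℝ) (i j k : ℤ) : ℝ :=
  f i (clampIdx N j) (clampIdx N k)

/-- Free-slip extension of the y-face component. -/
def fExtY (N : ℕ) (f : ℤ → ℤ → ℤ → ℝ) (i j k : ℤ) : ℝ :=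
  f (clampIdx N i) j (clampIdx N k)

/-- Free-slip extension of the z-face component. -/
def fExtZ (N : ℕ) (f : ℤ → ℤ → ℤ → ℝ) (i j k : ℤ) : ℝ :=
  f (clampIdx N i) (clampIdx N j) k

/-- Face-centered discrete Laplacian of the x-component (seven-point stencil,
free-slip ghost values in the tangential directions). -/
def lapFX (N : ℕ) (h : ℝ) (f : ℤ → ℤ → ℤ → ℝ) (i j k : ℤ) : ℝ :=
  (fExtX N f (i + 1) j k + fExtX N f (i - 1) j k + fExtX N f i (j + 1) k +
      fExtX N f i (j - 1) k + fExtX N f i j (k + 1) + fExtX N f i j (k - 1) -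
      6 * fExtX N f i j k) / h ^ 2

/-- Face-centered discrete Laplacian of the y-component. -/
def lapFY (N : ℕ) (h : ℝ) (f : ℤ → ℤ → ℤ → ℝ) (i j k : ℤ) : ℝ :=
  (fExtY N f (i + 1) j k + fExtY N f (i - 1) j k + fExtY N f i (j + 1) k +
      fExtY N f i (j - 1) k + fExtY N f i j (k + 1) + fExtY N f i j (k - 1) -
      6 * fExtY N f i j k) / h ^ 2

/-- Face-centered discrete Laplacian of the z-component. -/
def lapFZ (N : ℕ) (h : ℝ) (f : ℤ → ℤ → ℤ → ℝ) (i j k : ℤ) : ℝ :=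
  (fExtZ N f (i + 1) j k + fExtZ N f (i - 1) j k + fExtZ N f i (j + 1) k +
      fExtZ N f i (j - 1) k + fExtZ N f i j (k + 1) + fExtZ N f i j (k - 1) -
      6 * fExtZ N f i j k) / h ^ 2

/-- Face average `A_x φ` at the x-face `(i+1/2,j,k)`. -/
def AxF (N : ℕ) (φ : ℤ → ℤ → ℤ → ℝ) (i j k : ℤ) : ℝ :=
  (nExt N φ (i + 1) j k + nExt N φ i j k) / 2

/-- Face average `A_y φ`. -/
def AyF (N : ℕ) (φ : ℤ → ℤ → ℤ → ℝ) (i j k : ℤ) : ℝ :=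
  (nExt N φ i (j + 1) k + nExt N φ i j k) / 2

/-- Face average `A_z φ`. -/
def AzF (N : ℕ) (φ : ℤ → ℤ → ℤ → ℝ) (i j k : ℤ) : ℝ :=
  (nExt N φ i j (k + 1) + nExt N φ i j k) / 2


/-! ### Auxiliary lemmas -/

section Aux

lemma clampIdx_ge_one (N : ℕ) (i : ℤ) : 1 ≤ clampIdx N i := le_max_left _ _

lemma clampIdx_le (N : ℕ) (hN : 0 < N) (i : ℤ) : clampIdx N i ≤ N := by
  unfold clampIdx; omega

lemma clampIdx_of_mem {N : ℕ} {i : ℤ} (h1 : 1 ≤ i) (h2 : i ≤ (N:ℤ)) :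
    clampIdx N i = i := by unfold clampIdx; omega

lemma clampIdx_idem (N : ℕ) (hN : 0 < N) (i : ℤ) :
    clampIdx N (clampIdx N i) = clampIdx N i :=
  clampIdx_of_mem (clampIdx_ge_one N i) (clampIdx_le N hN i)

lemma mem_cellIdx {N : ℕ} {i : ℤ} : i ∈ cellIdx N ↔ 1 ≤ i ∧ i ≤ (N:ℤ) := by
  simp [cellIdx]

lemma clampIdx_cell {N : ℕ} {i : ℤ} (hi : i ∈ cellIdx N) : clampIdx N i = i :=
  clampIdx_of_mem (mem_cellIdx.1 hi).1 (mem_cellIdx.1 hi).2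

lemma one_mem_cellIdx {N : ℕ} (hN : 0 < N) : (1:ℤ) ∈ cellIdx N := by
  rw [mem_cellIdx]; omega

/-- Reindexing a cell sum by `range N`. -/
lemma sum_cellIdx (N : ℕ) (f : ℤ → ℝ) :
    ∑ i ∈ cellIdx N, f i = ∑ k ∈ Finset.range N, f ((k:ℤ)+1) := by
  have : cellIdx N = (Finset.range N).map
      ⟨fun k : ℕ => (k:ℤ)+1, by intro a b h; simpa using h⟩ := by
    ext i
    simp only [cellIdx, Finset.mem_Icc, Finset.mem_map, Finset.mem_range,
      Function.Embedding.coeFn_mk]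
    constructor
    · rintro ⟨h1, h2⟩
      exact ⟨(i-1).toNat, by omega, by show ((i-1).toNat : ℤ) + 1 = i; omega⟩
    · rintro ⟨k, hk, rfl⟩
      show 1 ≤ (k:ℤ)+1 ∧ (k:ℤ)+1 ≤ N
      omega
  rw [this, Finset.sum_map]
  rfl

lemma card_cellIdx (N : ℕ) : (cellIdx N).card = N := by
  simp [cellIdx, Int.card_Icc]

end Aux

section OneD

lemma b_top {N : ℕ} (hN : 0 < N) (b : ℤ → ℝ) (hb : ∀ t, b (clampIdx N t) = b t) :
    b ((N:ℤ)+1) = b (N:ℤ) := by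
  have h1 : clampIdx N ((N:ℤ)+1) = (N:ℤ) := by unfold clampIdx; omega
  rw [← hb ((N:ℤ)+1), h1]

lemma b_bot {N : ℕ} (hN : 0 < N) (b : ℤ → ℝ) (hb : ∀ t, b (clampIdx N t) = b t) :
    b 0 = b 1 := by
  have h1 : clampIdx N (0:ℤ) = 1 := by unfold clampIdx; omega
  rw [← hb 0, h1]

/-- 1D telescoping: the stencil sums to zero. -/
lemma oneD_tel {N : ℕ} (hN : 0 < N) (b : ℤ → ℝ) (hb : ∀ t, b (clampIdx N t) = b t) :
    ∑ k ∈ Finset.range N,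
    (b ((k:ℤ)+1+1) + b ((k:ℤ)+1-1) - 2 * b ((k:ℤ)+1)) = 0 := by
  have e1 : ∑ k ∈ Finset.range N, (b ((k:ℤ)+1+1) - b ((k:ℤ)+1))
      = b ((N:ℤ)+1) - b 1 := by
    have := Finset.sum_range_sub (fun n : ℕ => b ((n:ℤ)+1)) N
    simpa [add_assoc] using this
  have e2 : ∑ k ∈ Finset.range N, (b ((k:ℤ)+1) - b (k:ℤ))
      = b (N:ℤ) - b 0 := by
    have := Finset.sum_range_sub (fun n : ℕ => b (n:ℤ)) N
    simpa using this
  have e3 : ∑ k ∈ Finset.range N,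
      (b ((k:ℤ)+1+1) + b ((k:ℤ)+1-1) - 2 * b ((k:ℤ)+1))
      = ∑ k ∈ Finset.range N, ((b ((k:ℤ)+1+1) - b ((k:ℤ)+1)) - (b ((k:ℤ)+1) - b (k:ℤ))) := by
    apply Finset.sum_congr rfl; intro k _
    have h4 : (k:ℤ)+1-1 = (k:ℤ) := by ring
    rw [h4]; ring
  rw [e3, Finset.sum_sub_distrib, e1, e2, b_top hN b hb, b_bot hN b hb]
  ring

/-- 1D summation by parts identity. -/
lemma oneD_energy {N : ℕ} (hN : 0 < N) (b : ℤ → ℝ) (hb : ∀ t, b (clampIdx N t) = b t) :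
    ∑ k ∈ Finset.range N,
      b ((k:ℤ)+1) * (2 * b ((k:ℤ)+1) - b ((k:ℤ)+1+1) - b ((k:ℤ)+1-1))
    = ∑ k ∈ Finset.range (N-1), (b ((k:ℤ)+2) - b ((k:ℤ)+1))^2 := by
  obtain ⟨M, rfl⟩ : ∃ M, N = M + 1 := ⟨N - 1, by omega⟩
  have split : ∀ k ∈ Finset.range (M+1),
      b ((k:ℤ)+1) * (2 * b ((k:ℤ)+1) - b ((k:ℤ)+1+1) - b ((k:ℤ)+1-1))
      = b ((k:ℤ)+1) * (b ((k:ℤ)+1) - b ((k:ℤ)+2))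
        + b ((k:ℤ)+1) * (b ((k:ℤ)+1) - b (k:ℤ)) := by
    intro k _
    have h1 : (k:ℤ)+1-1 = (k:ℤ) := by ring
    have h2 : (k:ℤ)+1+1 = (k:ℤ)+2 := by ring
    rw [h1, h2]; ring
  rw [Finset.sum_congr rfl split, Finset.sum_add_distrib]
  have e1 : ∑ k ∈ Finset.range (M+1), b ((k:ℤ)+1) * (b ((k:ℤ)+1) - b ((k:ℤ)+2))
      = ∑ k ∈ Finset.range M, b ((k:ℤ)+1) * (b ((k:ℤ)+1) - b ((k:ℤ)+2)) := by
    rw [Finset.sum_range_succ]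
    have htop : b ((M:ℤ)+2) = b ((M:ℤ)+1) := by
      have := b_top (N := M+1) (by omega) b hb
      push_cast at this
      convert this using 2 <;> ring
    rw [htop]
    push_cast
    ring
  have e2 : ∑ k ∈ Finset.range (M+1), b ((k:ℤ)+1) * (b ((k:ℤ)+1) - b (k:ℤ))
      = ∑ k ∈ Finset.range M, b ((k:ℤ)+2) * (b ((k:ℤ)+2) - b ((k:ℤ)+1)) := by
    rw [Finset.sum_range_succ']
    have h0 : b (0:ℤ) = b 1 := b_bot (N := M+1) (by omega) b hb
    have hlast : b (((0:ℕ):ℤ)+1) * (b (((0:ℕ):ℤ)+1) - b ((0:ℕ):ℤ)) = 0 := by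
      simp only [Nat.cast_zero, zero_add, h0]; ring
    rw [hlast, add_zero]
    apply Finset.sum_congr rfl; intro k _
    push_cast; ring_nf
  rw [e1, e2, ← Finset.sum_add_distrib]
  simp only [Nat.add_sub_cancel]
  apply Finset.sum_congr rfl; intro k _; ring

end OneD

section ThreeD
variable {N : ℕ}

/-- Sum of the Laplacian over all cells vanishes (for clamp-invariant `φ`). -/
lemma lapC_sum_zero (hN : 0 < N) (h : ℝ) (φ : ℤ → ℤ → ℤ → ℝ)
    (hcl : ∀ i j k, nExt N φ i j k = φ i j k) :
    ∑ i ∈ cellIdx N, ∑ j ∈ cellIdx N, ∑ k ∈ cellIdx N, lapC N h φ i j k = 0 := by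
  have hb : ∀ j ∈ cellIdx N, ∀ k ∈ cellIdx N, ∀ t,
      φ (clampIdx N t) j k = φ t j k := by
    intro j hj k hk t
    have := hcl t j k
    rwa [nExt, clampIdx_cell hj, clampIdx_cell hk] at this
  have hbY : ∀ i ∈ cellIdx N, ∀ k ∈ cellIdx N, ∀ t,
      φ i (clampIdx N t) k = φ i t k := by
    intro i hi k hk t
    have := hcl i t k
    rwa [nExt, clampIdx_cell hi, clampIdx_cell hk] at this
  have hbZ : ∀ i ∈ cellIdx N, ∀ j ∈ cellIdx N, ∀ t,
      φ i j (clampIdx N t) = φ i j t := by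
    intro i hi j hj t
    have := hcl i j t
    rwa [nExt, clampIdx_cell hi, clampIdx_cell hj] at this
  have hexp : ∀ i j k : ℤ, lapC N h φ i j k =
      ((φ (i+1) j k + φ (i-1) j k - 2 * φ i j k) +
       (φ i (j+1) k + φ i (j-1) k - 2 * φ i j k) +
       (φ i j (k+1) + φ i j (k-1) - 2 * φ i j k)) / h^2 := by
    intro i j k
    rw [lapC, hcl, hcl, hcl, hcl, hcl, hcl, hcl]
    ring_nf
  simp only [hexp, ← Finset.sum_div]
  have main : ∑ i ∈ cellIdx N, ∑ j ∈ cellIdx N, ∑ k ∈ cellIdx N,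
      ((φ (i+1) j k + φ (i-1) j k - 2 * φ i j k) +
       (φ i (j+1) k + φ i (j-1) k - 2 * φ i j k) +
       (φ i j (k+1) + φ i j (k-1) - 2 * φ i j k)) = 0 := by
    simp only [Finset.sum_add_distrib]
    have ex : ∑ i ∈ cellIdx N, ∑ j ∈ cellIdx N, ∑ k ∈ cellIdx N,
        (φ (i+1) j k + φ (i-1) j k - 2 * φ i j k) = 0 := by
      rw [Finset.sum_comm]
      apply Finset.sum_eq_zero; intro j hj
      rw [Finset.sum_comm]
      apply Finset.sum_eq_zero; intro k hk
      rw [sum_cellIdx]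
      exact oneD_tel hN (fun t => φ t j k) (hb j hj k hk)
    have ey : ∑ i ∈ cellIdx N, ∑ j ∈ cellIdx N, ∑ k ∈ cellIdx N,
        (φ i (j+1) k + φ i (j-1) k - 2 * φ i j k) = 0 := by
      apply Finset.sum_eq_zero; intro i hi
      rw [Finset.sum_comm]
      apply Finset.sum_eq_zero; intro k hk
      rw [sum_cellIdx]
      exact oneD_tel hN (fun t => φ i t k) (hbY i hi k hk)
    have ez : ∑ i ∈ cellIdx N, ∑ j ∈ cellIdx N, ∑ k ∈ cellIdx N,
        (φ i j (k+1) + φ i j (k-1) - 2 * φ i j k) = 0 := by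
      apply Finset.sum_eq_zero; intro i hi
      apply Finset.sum_eq_zero; intro j hj
      rw [sum_cellIdx]
      exact oneD_tel hN (fun t => φ i j t) (hbZ i hi j hj)
    rw [ex, ey, ez]; ring
  rw [main, zero_div]

/-- Constancy along a line from vanishing consecutive differences. -/
lemma line_const (hN : 0 < N) (c : ℤ → ℝ)
    (hc : ∀ m ∈ Finset.range (N-1), c ((m:ℤ)+2) = c ((m:ℤ)+1)) :
    ∀ i ∈ cellIdx N, c i = c 1 := by
  have key : ∀ m : ℕ, m < N → c ((m:ℤ)+1) = c 1 := by
    intro m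
    induction m with
    | zero => intro _; norm_num
    | succ m ih =>
      intro hm
      have h1 : c ((m:ℤ)+2) = c ((m:ℤ)+1) := hc m (by simp; omega)
      have h2 := ih (by omega)
      have : ((m+1 : ℕ) : ℤ) + 1 = (m:ℤ)+2 := by push_cast; ring
      rw [this, h1, h2]
  intro i hi
  rw [mem_cellIdx] at hi
  have := key (i-1).toNat (by omega)
  rwa [show (((i-1).toNat : ℤ)+1) = i by omega] at this

set_option maxHeartbeats 1600000 in
/-- Energy estimate: a clamp-invariant discrete-harmonic zero-mean function
vanishes on the cells. -/
lemma energy_zero (hN : 0 < N) (φ : ℤ → ℤ → ℤ → ℝ)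
    (hcl : ∀ i j k, nExt N φ i j k = φ i j k)
    (hst : ∀ i ∈ cellIdx N, ∀ j ∈ cellIdx N, ∀ k ∈ cellIdx N,
      φ (i+1) j k + φ (i-1) j k + φ i (j+1) k + φ i (j-1) k +
        φ i j (k+1) + φ i j (k-1) - 6 * φ i j k = 0)
    (hmean : zeroMean N φ) :
    ∀ i ∈ cellIdx N, ∀ j ∈ cellIdx N, ∀ k ∈ cellIdx N, φ i j k = 0 := by
  have hb : ∀ j ∈ cellIdx N, ∀ k ∈ cellIdx N, ∀ t,
      φ (clampIdx N t) j k = φ t j k := by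
    intro j hj k hk t
    have := hcl t j k
    rwa [nExt, clampIdx_cell hj, clampIdx_cell hk] at this
  have hbY : ∀ i ∈ cellIdx N, ∀ k ∈ cellIdx N, ∀ t,
      φ i (clampIdx N t) k = φ i t k := by
    intro i hi k hk t
    have := hcl i t k
    rwa [nExt, clampIdx_cell hi, clampIdx_cell hk] at this
  have hbZ : ∀ i ∈ cellIdx N, ∀ j ∈ cellIdx N, ∀ t,
      φ i j (clampIdx N t) = φ i j t := by
    intro i hi j hj t
    have := hcl i j t
    rwa [nExt, clampIdx_cell hi, clampIdx_cell hj] at this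
  -- total energy vanishes
  have hE : (∑ i ∈ cellIdx N, ∑ j ∈ cellIdx N, ∑ k ∈ cellIdx N,
        φ i j k * (2 * φ i j k - φ (i+1) j k - φ (i-1) j k)) +
      (∑ i ∈ cellIdx N, ∑ j ∈ cellIdx N, ∑ k ∈ cellIdx N,
        φ i j k * (2 * φ i j k - φ i (j+1) k - φ i (j-1) k)) +
      (∑ i ∈ cellIdx N, ∑ j ∈ cellIdx N, ∑ k ∈ cellIdx N,
        φ i j k * (2 * φ i j k - φ i j (k+1) - φ i j (k-1))) = 0 := by
    simp only [← Finset.sum_add_distrib]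
    apply Finset.sum_eq_zero; intro i hi
    apply Finset.sum_eq_zero; intro j hj
    apply Finset.sum_eq_zero; intro k hk
    have h0 := hst i hi j hj k hk
    linear_combination (-(φ i j k)) * h0
  -- rewrite each directional energy as a sum of squares
  have ex : ∑ i ∈ cellIdx N, ∑ j ∈ cellIdx N, ∑ k ∈ cellIdx N,
      φ i j k * (2 * φ i j k - φ (i+1) j k - φ (i-1) j k)
      = ∑ j ∈ cellIdx N, ∑ k ∈ cellIdx N, ∑ m ∈ Finset.range (N-1),
          (φ ((m:ℤ)+2) j k - φ ((m:ℤ)+1) j k)^2 := by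
    rw [Finset.sum_comm]
    apply Finset.sum_congr rfl; intro j hj
    rw [Finset.sum_comm]
    apply Finset.sum_congr rfl; intro k hk
    rw [sum_cellIdx]
    exact oneD_energy hN (fun t => φ t j k) (hb j hj k hk)
  have ey : ∑ i ∈ cellIdx N, ∑ j ∈ cellIdx N, ∑ k ∈ cellIdx N,
      φ i j k * (2 * φ i j k - φ i (j+1) k - φ i (j-1) k)
      = ∑ i ∈ cellIdx N, ∑ k ∈ cellIdx N, ∑ m ∈ Finset.range (N-1),
          (φ i ((m:ℤ)+2) k - φ i ((m:ℤ)+1) k)^2 := by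
    apply Finset.sum_congr rfl; intro i hi
    rw [Finset.sum_comm]
    apply Finset.sum_congr rfl; intro k hk
    rw [sum_cellIdx]
    exact oneD_energy hN (fun t => φ i t k) (hbY i hi k hk)
  have ez : ∑ i ∈ cellIdx N, ∑ j ∈ cellIdx N, ∑ k ∈ cellIdx N,
      φ i j k * (2 * φ i j k - φ i j (k+1) - φ i j (k-1))
      = ∑ i ∈ cellIdx N, ∑ j ∈ cellIdx N, ∑ m ∈ Finset.range (N-1),
          (φ i j ((m:ℤ)+2) - φ i j ((m:ℤ)+1))^2 := by
    apply Finset.sum_congr rfl; intro i hi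
    apply Finset.sum_congr rfl; intro j hj
    rw [sum_cellIdx]
    exact oneD_energy hN (fun t => φ i j t) (hbZ i hi j hj)
  rw [ex, ey, ez] at hE
  have sq_zero : ∀ G : ℤ → ℤ → ℕ → ℝ,
      (∑ a ∈ cellIdx N, ∑ b ∈ cellIdx N, ∑ m ∈ Finset.range (N-1), (G a b m)^2) = 0 →
      ∀ a ∈ cellIdx N, ∀ b ∈ cellIdx N, ∀ m ∈ Finset.range (N-1), G a b m = 0 := by
    intro G hG a ha b hb' m hm
    have h1 := (Finset.sum_eq_zero_iff_of_nonneg (fun a _ =>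
      Finset.sum_nonneg (fun b _ => Finset.sum_nonneg (fun m _ => sq_nonneg _)))).1 hG a ha
    have h2 := (Finset.sum_eq_zero_iff_of_nonneg (fun b _ =>
      Finset.sum_nonneg (fun m _ => sq_nonneg _))).1 h1 b hb'
    have h3 := (Finset.sum_eq_zero_iff_of_nonneg (fun m _ => sq_nonneg _)).1 h2 m hm
    exact pow_eq_zero_iff two_ne_zero |>.1 h3
  have sq_nn : ∀ G : ℤ → ℤ → ℕ → ℝ,
      (0:ℝ) ≤ ∑ a ∈ cellIdx N, ∑ b ∈ cellIdx N, ∑ m ∈ Finset.range (N-1), (G a b m)^2 :=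
    fun G => Finset.sum_nonneg (fun a _ =>
      Finset.sum_nonneg (fun b _ => Finset.sum_nonneg (fun m _ => sq_nonneg _)))
  have nx := sq_nn (fun j k m => φ ((m:ℤ)+2) j k - φ ((m:ℤ)+1) j k)
  have ny := sq_nn (fun i k m => φ i ((m:ℤ)+2) k - φ i ((m:ℤ)+1) k)
  have nz := sq_nn (fun i j m => φ i j ((m:ℤ)+2) - φ i j ((m:ℤ)+1))
  have hx := sq_zero (fun j k m => φ ((m:ℤ)+2) j k - φ ((m:ℤ)+1) j k) (by linarith)
  have hy := sq_zero (fun i k m => φ i ((m:ℤ)+2) k - φ i ((m:ℤ)+1) k) (by linarith)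
  have hz := sq_zero (fun i j m => φ i j ((m:ℤ)+2) - φ i j ((m:ℤ)+1)) (by linarith)
  have hconst : ∀ i ∈ cellIdx N, ∀ j ∈ cellIdx N, ∀ k ∈ cellIdx N,
      φ i j k = φ 1 1 1 := by
    intro i hi j hj k hk
    have h1 : φ i j k = φ 1 j k :=
      line_const hN (fun t => φ t j k)
        (fun m hm => sub_eq_zero.1 (hx j hj k hk m hm)) i hi
    have h2 : φ 1 j k = φ 1 1 k :=
      line_const hN (fun t => φ 1 t k)
        (fun m hm => sub_eq_zero.1 (hy 1 (one_mem_cellIdx hN) k hk m hm)) j hj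
    have h3 : φ 1 1 k = φ 1 1 1 :=
      line_const hN (fun t => φ 1 1 t)
        (fun m hm => sub_eq_zero.1 (hz 1 (one_mem_cellIdx hN) 1 (one_mem_cellIdx hN) m hm)) k hk
    rw [h1, h2, h3]
  have hsum : ∑ i ∈ cellIdx N, ∑ j ∈ cellIdx N, ∑ k ∈ cellIdx N, φ i j k
      = (N:ℝ)^3 * φ 1 1 1 := by
    rw [Finset.sum_congr rfl (fun i hi => Finset.sum_congr rfl (fun j hj =>
      Finset.sum_congr rfl (fun k hk => hconst i hi j hj k hk)))]
    simp [Finset.sum_const, card_cellIdx]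
    ring
  rw [zeroMean, hsum] at hmean
  have hc : φ 1 1 1 = 0 := by
    have hNne : (N:ℝ)^3 ≠ 0 := by positivity
    exact (mul_eq_zero.1 hmean).resolve_left hNne
  intro i hi j hj k hk
  rw [hconst i hi j hj k hk, hc]

end ThreeD

section LinAlg
variable {N : ℕ}

/-- Cell index as an element of `Fin N`. -/
def c2f (hN : 0 < N) (i : ℤ) : Fin N :=
  ⟨(clampIdx N i - 1).toNat, by
    have h1 := clampIdx_ge_one N i
    have h2 := clampIdx_le N hN i
    omega⟩

lemma c2f_clamp (hN : 0 < N) (i : ℤ) : c2f hN (clampIdx N i) = c2f hN i := by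
  simp [c2f, clampIdx_idem N hN i]

lemma c2f_coe (hN : 0 < N) {i : ℤ} (hi : i ∈ cellIdx N) :
    ((c2f hN i : ℕ) : ℤ) + 1 = i := by
  rw [mem_cellIdx] at hi
  have := clampIdx_of_mem hi.1 hi.2
  simp only [c2f, this]
  omega

lemma c2f_fin (hN : 0 < N) (a : Fin N) : c2f hN (((a:ℕ):ℤ)+1) = a := by
  have ha := a.isLt
  have h1 : clampIdx N (((a:ℕ):ℤ)+1) = ((a:ℕ):ℤ)+1 :=
    clampIdx_of_mem (by omega) (by omega)
  apply Fin.ext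
  simp only [c2f, h1]
  omega

lemma fin_mem_cellIdx (a : Fin N) : (((a:ℕ):ℤ)+1) ∈ cellIdx N := by
  have := a.isLt; rw [mem_cellIdx]; omega

/-- Extension of a `Fin`-indexed vector to a clamp-invariant grid function. -/
def extV (hN : 0 < N) (v : Fin N → Fin N → Fin N → ℝ) : ℤ → ℤ → ℤ → ℝ :=
  fun i j k => v (c2f hN i) (c2f hN j) (c2f hN k)

lemma extV_clamp (hN : 0 < N) (v : Fin N → Fin N → Fin N → ℝ) :
    ∀ i j k, nExt N (extV hN v) i j k = extV hN v i j k := by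
  intro i j k; simp [nExt, extV, c2f_clamp]

lemma extV_cell (hN : 0 < N) (v : Fin N → Fin N → Fin N → ℝ) (a b c : Fin N) :
    extV hN v (((a:ℕ):ℤ)+1) (((b:ℕ):ℤ)+1) (((c:ℕ):ℤ)+1) = v a b c := by
  simp [extV, c2f_fin]

lemma sum_fin3 (F : ℤ → ℤ → ℤ → ℝ) :
    ∑ a : Fin N, ∑ b : Fin N, ∑ c : Fin N,
      F (((a:ℕ):ℤ)+1) (((b:ℕ):ℤ)+1) (((c:ℕ):ℤ)+1)
    = ∑ i ∈ cellIdx N, ∑ j ∈ cellIdx N, ∑ k ∈ cellIdx N, F i j k := by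
  simp only [sum_cellIdx]
  rw [Fin.sum_univ_eq_sum_range (fun a : ℕ => ∑ b : Fin N, ∑ c : Fin N,
    F ((a:ℤ)+1) (((b:ℕ):ℤ)+1) (((c:ℕ):ℤ)+1))]
  apply Finset.sum_congr rfl; intro a _
  rw [Fin.sum_univ_eq_sum_range (fun b : ℕ => ∑ c : Fin N,
    F ((a:ℤ)+1) ((b:ℤ)+1) (((c:ℕ):ℤ)+1))]
  apply Finset.sum_congr rfl; intro b _
  rw [Fin.sum_univ_eq_sum_range (fun c : ℕ => F ((a:ℤ)+1) ((b:ℤ)+1) ((c:ℤ)+1))]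

/-- The perturbed Neumann operator `v ↦ -Δ_h (ext v) + (Σ v)`. -/
def Bmap (hN : 0 < N) (h : ℝ) :
    (Fin N → Fin N → Fin N → ℝ) →ₗ[ℝ] (Fin N → Fin N → Fin N → ℝ) where
  toFun v := fun a b c =>
    -lapC N h (extV hN v) (((a:ℕ):ℤ)+1) (((b:ℕ):ℤ)+1) (((c:ℕ):ℤ)+1)
      + ∑ x : Fin N, ∑ y : Fin N, ∑ z : Fin N, v x y z
  map_add' := by
    intro u v; funext a b c
    simp only [lapC, nExt, extV, Pi.add_apply, Finset.sum_add_distrib]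
    ring
  map_smul' := by
    intro r v; funext a b c
    simp only [lapC, nExt, extV, Pi.smul_apply, smul_eq_mul,
      ← Finset.mul_sum, RingHom.id_apply]
    ring

lemma Bmap_apply (hN : 0 < N) (h : ℝ) (v : Fin N → Fin N → Fin N → ℝ)
    (a b c : Fin N) :
    Bmap hN h v a b c =
      -lapC N h (extV hN v) (((a:ℕ):ℤ)+1) (((b:ℕ):ℤ)+1) (((c:ℕ):ℤ)+1)
        + ∑ x : Fin N, ∑ y : Fin N, ∑ z : Fin N, v x y z := rfl

lemma Bmap_account (hN : 0 < N) (h : ℝ) (v : Fin N → Fin N → Fin N → ℝ) :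
    ∑ a : Fin N, ∑ b : Fin N, ∑ c : Fin N, Bmap hN h v a b c
      = (N:ℝ)^3 * (∑ x : Fin N, ∑ y : Fin N, ∑ z : Fin N, v x y z) := by
  have e1 : ∑ a : Fin N, ∑ b : Fin N, ∑ c : Fin N,
      -lapC N h (extV hN v) (((a:ℕ):ℤ)+1) (((b:ℕ):ℤ)+1) (((c:ℕ):ℤ)+1) = 0 := by
    rw [sum_fin3 (fun i j k => -lapC N h (extV hN v) i j k)]
    have e2 : ∑ i ∈ cellIdx N, ∑ j ∈ cellIdx N, ∑ k ∈ cellIdx N,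
        -lapC N h (extV hN v) i j k
        = -(∑ i ∈ cellIdx N, ∑ j ∈ cellIdx N, ∑ k ∈ cellIdx N,
          lapC N h (extV hN v) i j k) := by
      simp [Finset.sum_neg_distrib]
    rw [e2, lapC_sum_zero hN h (extV hN v) (extV_clamp hN v), neg_zero]
  simp only [Bmap_apply, Finset.sum_add_distrib, Finset.sum_const,
    Finset.card_univ, Fintype.card_fin, smul_eq_mul, e1]
  push_cast
  ring

/-- Existence of a zero-mean solution of the discrete Neumann problem,
with a clamp-invariant solution. -/
lemma neumann_exists (hN : 0 < N) {h : ℝ} (hh : h ≠ 0) (g : ℤ → ℤ → ℤ → ℝ)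
    (hg : zeroMean N g) :
    ∃ p : ℤ → ℤ → ℤ → ℝ, zeroMean N p ∧ (∀ i j k, nExt N p i j k = p i j k) ∧
      ∀ i ∈ cellIdx N, ∀ j ∈ cellIdx N, ∀ k ∈ cellIdx N,
        -lapC N h p i j k = g i j k := by
  classical
  have hNR : ((N:ℝ))^3 ≠ 0 := by positivity
  -- injectivity
  have hinj : Function.Injective (Bmap hN h) := by
    rw [← LinearMap.ker_eq_bot, LinearMap.ker_eq_bot']
    intro v hv
    set S := ∑ x : Fin N, ∑ y : Fin N, ∑ z : Fin N, v x y z with hS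
    have hv' : ∀ a b c : Fin N,
        -lapC N h (extV hN v) (((a:ℕ):ℤ)+1) (((b:ℕ):ℤ)+1) (((c:ℕ):ℤ)+1) + S = 0 := by
      intro a b c
      have h0 := congrFun (congrFun (congrFun hv a) b) c
      rwa [Bmap_apply] at h0
    have hS0 : S = 0 := by
      have h1 := Bmap_account hN h v
      have h2 : ∑ a : Fin N, ∑ b : Fin N, ∑ c : Fin N, Bmap hN h v a b c = 0 := by
        rw [hv]; simp
      rw [h2, ← hS] at h1
      have h3 := h1.symm
      exact (mul_eq_zero.1 h3).resolve_left hNR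
    have hlap : ∀ i ∈ cellIdx N, ∀ j ∈ cellIdx N, ∀ k ∈ cellIdx N,
        lapC N h (extV hN v) i j k = 0 := by
      intro i hi j hj k hk
      have h0 := hv' (c2f hN i) (c2f hN j) (c2f hN k)
      rw [c2f_coe hN hi, c2f_coe hN hj, c2f_coe hN hk, hS0, add_zero] at h0
      linarith
    have hst : ∀ i ∈ cellIdx N, ∀ j ∈ cellIdx N, ∀ k ∈ cellIdx N,
        extV hN v (i+1) j k + extV hN v (i-1) j k + extV hN v i (j+1) k +
          extV hN v i (j-1) k + extV hN v i j (k+1) + extV hN v i j (k-1)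
          - 6 * extV hN v i j k = 0 := by
      intro i hi j hj k hk
      have h1 := hlap i hi j hj k hk
      rw [lapC] at h1
      simp only [extV_clamp hN v] at h1
      have h2 : h^2 ≠ 0 := pow_ne_zero _ hh
      field_simp at h1
      linarith
    have hmean : zeroMean N (extV hN v) := by
      rw [zeroMean, ← sum_fin3]
      simp only [extV_cell]
      exact hS0
    have hz := energy_zero hN (extV hN v) (extV_clamp hN v) hst hmean
    funext a b c
    have h4 := hz _ (fin_mem_cellIdx a) _ (fin_mem_cellIdx b) _ (fin_mem_cellIdx c)
    rw [extV_cell] at h4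
    simpa using h4
  have hsurj : Function.Surjective (Bmap hN h) :=
    LinearMap.injective_iff_surjective.1 hinj
  obtain ⟨v, hv⟩ := hsurj (fun a b c => g (((a:ℕ):ℤ)+1) (((b:ℕ):ℤ)+1) (((c:ℕ):ℤ)+1))
  set S := ∑ x : Fin N, ∑ y : Fin N, ∑ z : Fin N, v x y z with hS
  have hv' : ∀ a b c : Fin N,
      -lapC N h (extV hN v) (((a:ℕ):ℤ)+1) (((b:ℕ):ℤ)+1) (((c:ℕ):ℤ)+1) + S
      = g (((a:ℕ):ℤ)+1) (((b:ℕ):ℤ)+1) (((c:ℕ):ℤ)+1) := by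
    intro a b c
    have h0 := congrFun (congrFun (congrFun hv a) b) c
    rwa [Bmap_apply] at h0
  have hS0 : S = 0 := by
    have h1 := Bmap_account hN h v
    have h2 : ∑ a : Fin N, ∑ b : Fin N, ∑ c : Fin N, Bmap hN h v a b c = 0 := by
      rw [hv, sum_fin3 g]
      exact hg
    rw [h2, ← hS] at h1
    have h3 := h1.symm
    exact (mul_eq_zero.1 h3).resolve_left hNR
  refine ⟨extV hN v, ?_, extV_clamp hN v, ?_⟩
  · rw [zeroMean, ← sum_fin3]
    simp only [extV_cell]
    exact hS0
  · intro i hi j hj k hk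
    have h0 := hv' (c2f hN i) (c2f hN j) (c2f hN k)
    rwa [c2f_coe hN hi, c2f_coe hN hj, c2f_coe hN hk, hS0, add_zero] at h0

end LinAlg

section Helpers
variable {N : ℕ}

/-- Raw telescoping over the cells. -/
lemma tel_raw (c : ℤ → ℝ) :
    ∑ i ∈ cellIdx N, (c i - c (i-1)) = c (N:ℤ) - c 0 := by
  rw [sum_cellIdx]
  have h0 := Finset.sum_range_sub (fun m : ℕ => c (m:ℤ)) N
  push_cast at h0
  rw [← h0]
  apply Finset.sum_congr rfl; intro m _
  have e1 : (m:ℤ)+1-1 = (m:ℤ) := by ring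
  rw [e1]

lemma nExt_cell {φ : ℤ → ℤ → ℤ → ℝ} {i j k : ℤ} (hi : i ∈ cellIdx N)
    (hj : j ∈ cellIdx N) (hk : k ∈ cellIdx N) : nExt N φ i j k = φ i j k := by
  rw [nExt, clampIdx_cell hi, clampIdx_cell hj, clampIdx_cell hk]

lemma nExt_nExt (hN : 0 < N) (φ : ℤ → ℤ → ℤ → ℝ) (i j k : ℤ) :
    nExt N (nExt N φ) i j k = nExt N φ i j k := by
  simp [nExt, clampIdx_idem N hN]

end Helpers
/-- discrete Neumann Poisson problem and Helmholtz
projection: every zero-mean cell-centered `g` admits a unique zero-mean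
cell-centered solution `p` of `-Δ_h p = g` on the cells; moreover for every
MAC field `f` with no-penetration boundary conditions, `div_h f` has zero
mean, and with `p` the zero-mean solution of `-Δ_h p = div_h f`, the discrete
Helmholtz projection `P_H^h f = f + ∇_h p` is discretely divergence-free. -/
theorem discrete_helmholtz (L : ℝ) (hL : 0 < L) (N : ℕ) (hN : 0 < N) :
    (∀ g : ℤ → ℤ → ℤ → ℝ, zeroMean N g →
      ∃ p : ℤ → ℤ → ℤ → ℝ,
        (zeroMean N p ∧
          ∀ i ∈ cellIdx N, ∀ j ∈ cellIdx N, ∀ k ∈ cellIdx N,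
            -lapC N (L / N) p i j k = g i j k) ∧
        ∀ q : ℤ → ℤ → ℤ → ℝ, zeroMean N q →
          (∀ i ∈ cellIdx N, ∀ j ∈ cellIdx N, ∀ k ∈ cellIdx N,
            -lapC N (L / N) q i j k = g i j k) →
          CellEqOn N q p) ∧
    (∀ fx fy fz : ℤ → ℤ → ℤ → ℝ, NoPen N fx fy fz →
      zeroMean N (divH (L / N) fx fy fz) ∧
      ∀ p : ℤ → ℤ → ℤ → ℝ, zeroMean N p →
        (∀ i ∈ cellIdx N, ∀ j ∈ cellIdx N, ∀ k ∈ cellIdx N,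
          -lapC N (L / N) p i j k = divH (L / N) fx fy fz i j k) →
        ∀ i ∈ cellIdx N, ∀ j ∈ cellIdx N, ∀ k ∈ cellIdx N,
          divH (L / N) (fun a b c => fx a b c + Dx N (L / N) p a b c)
            (fun a b c => fy a b c + Dy N (L / N) p a b c)
            (fun a b c => fz a b c + Dz N (L / N) p a b c) i j k = 0) := by
  have hNZ : (0:ℝ) < (N:ℝ) := by exact_mod_cast hN
  have hh : (L / (N:ℝ)) ≠ 0 := ne_of_gt (div_pos hL hNZ)
  constructor
  · -- Part 1: the Neumann problem
    intro g hg
    obtain ⟨p, hpm, hpcl, hpsol⟩ := neumann_exists hN hh g hg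
    refine ⟨p, ⟨hpm, hpsol⟩, ?_⟩
    -- uniqueness
    intro q hqm hqsol
    set h : ℝ := L / (N:ℝ) with hdef
    have hcl : ∀ i j k, nExt N (fun a b c => nExt N q a b c - nExt N p a b c) i j k
        = nExt N q i j k - nExt N p i j k := by
      intro i j k
      show nExt N q _ _ _ - nExt N p _ _ _ = _
      simp only [nExt, clampIdx_idem N hN]
    have hsq : h^2 ≠ 0 := pow_ne_zero _ hh
    have hst : ∀ i ∈ cellIdx N, ∀ j ∈ cellIdx N, ∀ k ∈ cellIdx N,
        (fun a b c => nExt N q a b c - nExt N p a b c) (i+1) j k +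
        (fun a b c => nExt N q a b c - nExt N p a b c) (i-1) j k +
        (fun a b c => nExt N q a b c - nExt N p a b c) i (j+1) k +
        (fun a b c => nExt N q a b c - nExt N p a b c) i (j-1) k +
        (fun a b c => nExt N q a b c - nExt N p a b c) i j (k+1) +
        (fun a b c => nExt N q a b c - nExt N p a b c) i j (k-1) -
        6 * (fun a b c => nExt N q a b c - nExt N p a b c) i j k = 0 := by
      intro i hi j hj k hk
      have e1 : -lapC N h q i j k = -lapC N h p i j k := by
        rw [hqsol i hi j hj k hk, hpsol i hi j hj k hk]
      rw [lapC, lapC] at e1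
      have e2 : (nExt N q (i+1) j k + nExt N q (i-1) j k + nExt N q i (j+1) k +
          nExt N q i (j-1) k + nExt N q i j (k+1) + nExt N q i j (k-1) -
          6 * nExt N q i j k)
          = (nExt N p (i+1) j k + nExt N p (i-1) j k + nExt N p i (j+1) k +
          nExt N p i (j-1) k + nExt N p i j (k+1) + nExt N p i j (k-1) -
          6 * nExt N p i j k) := by
        field_simp at e1
        linarith
      simp only
      linarith
    have hmean : zeroMean N (fun a b c => nExt N q a b c - nExt N p a b c) := by
      rw [zeroMean]
      have : ∀ i ∈ cellIdx N, (∑ j ∈ cellIdx N, ∑ k ∈ cellIdx N,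
          (nExt N q i j k - nExt N p i j k)) =
          ∑ j ∈ cellIdx N, ∑ k ∈ cellIdx N, (q i j k - p i j k) := by
        intro i hi
        refine Finset.sum_congr rfl fun j hj => Finset.sum_congr rfl fun k hk => ?_
        rw [nExt_cell hi hj hk, nExt_cell hi hj hk]
      rw [Finset.sum_congr rfl this]
      simp only [Finset.sum_sub_distrib]
      rw [hqm, hpm]
      ring
    have hz := energy_zero hN _ hcl hst hmean
    intro i hi j hj k hk
    have h4 := hz i hi j hj k hk
    rw [nExt_cell hi hj hk, nExt_cell hi hj hk] at h4
    linarith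
  · -- Part 2: the Helmholtz projection
    intro fx fy fz hnp
    obtain ⟨hX, hY, hZ⟩ := hnp
    constructor
    · -- zero mean of the divergence
      rw [zeroMean]
      simp only [divH, ← Finset.sum_div]
      have main : ∑ i ∈ cellIdx N, ∑ j ∈ cellIdx N, ∑ k ∈ cellIdx N,
          (fx i j k - fx (i-1) j k + fy i j k - fy i (j-1) k +
            fz i j k - fz i j (k-1)) = 0 := by
        have split : ∀ i ∈ cellIdx N, ∀ j ∈ cellIdx N, ∀ k ∈ cellIdx N,
            fx i j k - fx (i-1) j k + fy i j k - fy i (j-1) k +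
              fz i j k - fz i j (k-1)
            = (fx i j k - fx (i-1) j k) + ((fy i j k - fy i (j-1) k) +
              (fz i j k - fz i j (k-1))) := by intro _ _ _ _ _ _; ring
        rw [Finset.sum_congr rfl fun i hi => Finset.sum_congr rfl fun j hj =>
          Finset.sum_congr rfl fun k hk => split i hi j hj k hk]
        simp only [Finset.sum_add_distrib]
        have ex : ∑ i ∈ cellIdx N, ∑ j ∈ cellIdx N, ∑ k ∈ cellIdx N,
            (fx i j k - fx (i-1) j k) = 0 := by
          rw [Finset.sum_comm]
          apply Finset.sum_eq_zero; intro j hj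
          rw [Finset.sum_comm]
          apply Finset.sum_eq_zero; intro k hk
          rw [tel_raw (fun t => fx t j k)]
          have := hX j hj k hk
          rw [this.1, this.2]
          ring
        have ey : ∑ i ∈ cellIdx N, ∑ j ∈ cellIdx N, ∑ k ∈ cellIdx N,
            (fy i j k - fy i (j-1) k) = 0 := by
          apply Finset.sum_eq_zero; intro i hi
          rw [Finset.sum_comm]
          apply Finset.sum_eq_zero; intro k hk
          rw [tel_raw (fun t => fy i t k)]
          have := hY i hi k hk
          rw [this.1, this.2]
          ring
        have ez : ∑ i ∈ cellIdx N, ∑ j ∈ cellIdx N, ∑ k ∈ cellIdx N,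
            (fz i j k - fz i j (k-1)) = 0 := by
          apply Finset.sum_eq_zero; intro i hi
          apply Finset.sum_eq_zero; intro j hj
          rw [tel_raw (fun t => fz i j t)]
          have := hZ i hi j hj
          rw [this.1, this.2]
          ring
        rw [ex, ey, ez]
        ring
      rw [main, zero_div]
    · -- the projection is divergence free
      intro p hpm hpsol i hi j hj k hk
      have key : divH (L / (N:ℝ))
          (fun a b c => fx a b c + Dx N (L / (N:ℝ)) p a b c)
          (fun a b c => fy a b c + Dy N (L / (N:ℝ)) p a b c)
          (fun a b c => fz a b c + Dz N (L / (N:ℝ)) p a b c) i j k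
          = divH (L / (N:ℝ)) fx fy fz i j k + lapC N (L / (N:ℝ)) p i j k := by
        simp only [divH, Dx, Dy, Dz, lapC]
        simp only [show ∀ m:ℤ, m-1+1 = m from fun m => by ring]
        field_simp
        ring
      rw [key]
      have := hpsol i hi j hj k hk
      linarith
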